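/- For multisets S, S', T, T' in S_Φ(X, x_0), one has d_Φ(S + S', T + T') ≤ d_Φ(S, T) + d_Φ(S', T'), where + denotes multiset sum (addition of multiplicities away from the basepoint). -/

import Mathlib

open Filter

/-- A symmetric norm: a norm on the space `c_00` of finitely supported real
sequences (modelled as `ℕ →₀ ℝ`), normalised by `Φ(1,0,0,…) = 1`, and invariant
under permutations of the entries and under replacing entries by their absolute
values. -/
structure SymmetricNorm where
  toFun : (ℕ →₀ ℝ) → ℝ
  nonneg : ∀ ξ, 0 ≤ toFun ξ
  eq_zero : ∀ ξ, toFun ξ = 0 → ξ = 0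
  add_le : ∀ ξ η, toFun (ξ + η) ≤ toFun ξ + toFun η
  smul_eq : ∀ (c : ℝ) (ξ), toFun (c • ξ) = |c| * toFun ξ
  norm_single : toFun (Finsupp.single 0 1) = 1
  perm_invariant : ∀ (π : Equiv.Perm ℕ) (ξ), toFun (Finsupp.equivMapDomain π ξ) = toFun ξ
  abs_invariant : ∀ (ξ : ℕ →₀ ℝ), toFun (Finsupp.mapRange (fun a => |a|) abs_zero ξ) = toFun ξ

/-- The truncation `(ξ_0, …, ξ_{n-1}, 0, 0, …)` of a sequence, as an element of `c_00`. -/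
noncomputable def truncF (ξ : ℕ → ℝ) (n : ℕ) : ℕ →₀ ℝ :=
  ∑ i ∈ Finset.range n, Finsupp.single i (ξ i)

/-- The extension of a symmetric norm to sequences: `Φ(ξ) = lim_n Φ(ξ_0,…,ξ_{n-1},0,0,…)`. -/
noncomputable def SymmetricNorm.ext (Φ : SymmetricNorm) (ξ : ℕ → ℝ) : ℝ :=
  limUnder atTop fun n => Φ.toFun (truncF ξ n)

/-- Membership in the natural domain `ℓ_Φ`: the sequence tends to `0` and the
`Φ`-norms of its truncations converge. -/
def MemLPhi (Φ : SymmetricNorm) (ξ : ℕ → ℝ) : Prop :=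
  Tendsto ξ atTop (nhds 0) ∧ ∃ L, Tendsto (fun n => Φ.toFun (truncF ξ n)) atTop (nhds L)

/-- Membership in `ℓ_Φ^+`: nonnegative `Φ`-summable sequences. -/
def MemLPhiPlus (Φ : SymmetricNorm) (ξ : ℕ → ℝ) : Prop :=
  (∀ i, 0 ≤ ξ i) ∧ MemLPhi Φ ξ

/-- A symmetric norm is regular if `Φ(ξ_{n+1}, ξ_{n+2}, …) → 0` for every `ξ ∈ ℓ_Φ`. -/
def SymmetricNorm.Regular (Φ : SymmetricNorm) : Prop :=
  ∀ ξ : ℕ → ℝ, MemLPhi Φ ξ →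
    Tendsto (fun n => Φ.ext fun i => ξ (n + i)) atTop (nhds 0)

/-- `partialMax ξ k` is the supremum of sums of `k` distinct entries of `ξ`;
for nonnegative `ξ ∈ c_0` this equals `ξ^↓_1 + ⋯ + ξ^↓_k`. -/
noncomputable def partialMax (ξ : ℕ → ℝ) (k : ℕ) : ℝ :=
  sSup ((fun s : Finset ℕ => ∑ i ∈ s, ξ i) '' {s | s.card = k})

/-- The nonincreasing rearrangement `ξ^↓` of a (nonnegative, null) sequence,
defined via `ξ^↓_1 = max ξ_i`, `ξ^↓_1 + ξ^↓_2 = max_{i ≠ j} (ξ_i + ξ_j)`, …. -/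
noncomputable def decRearr (ξ : ℕ → ℝ) (k : ℕ) : ℝ :=
  partialMax ξ (k + 1) - partialMax ξ k
open scoped Classical

variable {X : Type*} [MetricSpace X]

/-- `s : ℕ → X` is an enumeration of the countable multiset `S` in `(X, x₀)`:
every point other than the basepoint occurs in `s` exactly according to its
multiplicity in `S`. -/
def IsEnum (x0 : X) (S : X → ℕ∞) (s : ℕ → X) : Prop :=
  ∀ x, x ≠ x0 → S x = {i : ℕ | s i = x}.encard

/-- A countable multiset in `(X, x₀)`: a multiplicity function in which the
basepoint is the only point of infinite multiplicity and whose support is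
countable. -/
def IsCMultiset (x0 : X) (S : X → ℕ∞) : Prop :=
  S x0 = ⊤ ∧ (∀ x, x ≠ x0 → S x ≠ ⊤) ∧ {x | S x ≠ 0}.Countable

/-- Membership in `S_Φ(X, x₀)`: a countable multiset whose points `s_i` satisfy
`(d(x₀, s_i))_i ∈ ℓ_Φ`. -/
def MemSPhi (Φ : SymmetricNorm) (x0 : X) (S : X → ℕ∞) : Prop :=
  IsCMultiset x0 S ∧ ∃ s : ℕ → X, IsEnum x0 S s ∧ MemLPhi Φ fun i => dist x0 (s i)

/-- The distance `d_Φ(S, T)`: the infimum over pairs of enumerations `(s_i), (t_i)`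
of `S, T` of `Φ(d(s_1,t_1), d(s_2,t_2), …)`. -/
noncomputable def dPhi (Φ : SymmetricNorm) (x0 : X) (S T : X → ℕ∞) : ℝ :=
  sInf {r | ∃ s t : ℕ → X, IsEnum x0 S s ∧ IsEnum x0 T t ∧
    MemLPhi Φ (fun i => dist (s i) (t i)) ∧ r = Φ.ext fun i => dist (s i) (t i)}

/-- The sum of two multisets (addition of multiplicities away from the basepoint). -/
noncomputable def msum (x0 : X) (S T : X → ℕ∞) : X → ℕ∞ := fun x => if x = x0 then ⊤ else S x + T x

/-- The difference of two multisets (subtraction of multiplicities away from the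
basepoint). -/
noncomputable def mdiff (x0 : X) (S T : X → ℕ∞) : X → ℕ∞ := fun x => if x = x0 then ⊤ else S x - T x

/-- The intersection of a multiset with a subset `V ⊆ X`. -/
noncomputable def minter (x0 : X) (S : X → ℕ∞) (V : Set X) : X → ℕ∞ :=
  fun x => if x = x0 then ⊤ else if x ∈ V then S x else 0

/-- The multiset `S` has rank `n`: its total multiplicity away from the basepoint
is `n`, i.e. its non-basepoint part can be listed by a tuple of length `n`. -/
def HasRank (x0 : X) (S : X → ℕ∞) (n : ℕ) : Prop :=
  ∃ f : Fin n → X, (∀ i, f i ≠ x0) ∧ ∀ x, x ≠ x0 → S x = {i : Fin n | f i = x}.encard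
-- Helper section
section Helpers

lemma truncF_apply (ξ : ℕ → ℝ) (n i : ℕ) : truncF ξ n i = if i < n then ξ i else 0 := by
  rw [truncF, Finsupp.finset_sum_apply]
  by_cases h : i < n
  · rw [Finset.sum_eq_single i]
    · simp [h]
    · intro b _ hb; simp [Finsupp.single_apply, hb]
    · intro hi; exact absurd (Finset.mem_range.2 h) hi
  · simp only [if_neg h]
    apply Finset.sum_eq_zero
    intro b hb
    have : b ≠ i := by rintro rfl; exact h (Finset.mem_range.1 hb)
    simp [Finsupp.single_apply, this]

lemma phi_flip (Φ : SymmetricNorm) (ζ : ℕ →₀ ℝ) (a : ℕ) :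
    Φ.toFun (ζ.update a (-(ζ a))) = Φ.toFun ζ := by
  have h1 := Φ.abs_invariant (ζ.update a (-(ζ a)))
  have h2 := Φ.abs_invariant ζ
  rw [← h1, ← h2]
  congr 1
  ext i
  simp only [Finsupp.mapRange_apply, Finsupp.coe_update]
  by_cases hia : i = a
  · subst hia; simp
  · simp [Function.update_of_ne hia]

lemma phi_update_le (Φ : SymmetricNorm) (ζ : ℕ →₀ ℝ) (a : ℕ) (c : ℝ) (h : |c| ≤ |ζ a|) :
    Φ.toFun (ζ.update a c) ≤ Φ.toFun ζ := by
  by_cases hz : ζ a = 0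
  · have hc : c = 0 := by rw [hz] at h; simpa using abs_nonpos_iff.mp (by simpa using h)
    have : ζ.update a c = ζ := by
      ext i; by_cases hia : i = a
      · subst hia; simp [hc, hz]
      · simp [Finsupp.coe_update, Function.update_of_ne hia]
    rw [this]
  · set t : ℝ := c / ζ a with ht
    have habs : |t| ≤ 1 := by
      rw [ht, abs_div]
      exact div_le_one_of_le₀ h (abs_nonneg _)
    have hdecomp : ζ.update a c = ((1 + t)/2) • ζ + ((1 - t)/2) • (ζ.update a (-(ζ a))) := by
      ext i
      simp only [Finsupp.add_apply, Finsupp.smul_apply, Finsupp.coe_update, smul_eq_mul]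
      by_cases hia : i = a
      · subst hia
        simp only [Function.update_self]
        field_simp [ht]
        rw [ht]; field_simp; ring
      · simp only [Function.update_of_ne hia]
        ring
    calc Φ.toFun (ζ.update a c)
        ≤ Φ.toFun (((1 + t)/2) • ζ) + Φ.toFun (((1 - t)/2) • (ζ.update a (-(ζ a)))) := by
          rw [hdecomp]; exact Φ.add_le _ _
      _ = |(1 + t)/2| * Φ.toFun ζ + |(1 - t)/2| * Φ.toFun ζ := by
          rw [Φ.smul_eq, Φ.smul_eq, phi_flip]
      _ = Φ.toFun ζ := by
          have h1 : |(1 + t)/2| = (1 + t)/2 := abs_of_nonneg (by cases abs_le.1 habs; linarith)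
          have h2 : |(1 - t)/2| = (1 - t)/2 := abs_of_nonneg (by cases abs_le.1 habs; linarith)
          rw [h1, h2]; ring

lemma phi_mono (Φ : SymmetricNorm) (ξ η : ℕ →₀ ℝ) (h : ∀ i, |ξ i| ≤ η i) :
    Φ.toFun ξ ≤ Φ.toFun η := by
  have key : ∀ s : Finset ℕ, ∀ ξ : ℕ →₀ ℝ, (∀ i, |ξ i| ≤ η i) → (∀ i ∉ s, ξ i = η i) →
      Φ.toFun ξ ≤ Φ.toFun η := by
    intro s
    induction s using Finset.induction_on with
    | empty =>
      intro ξ h1 h2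
      have : ξ = η := by ext i; exact h2 i (Finset.notMem_empty i)
      rw [this]
    | insert a s ha ih =>
      intro ξ h1 h2
      set ξ' := ξ.update a (η a) with hξ'
      have hηa : 0 ≤ η a := le_trans (abs_nonneg _) (h1 a)
      have step1 : Φ.toFun ξ ≤ Φ.toFun ξ' := by
        have : ξ = ξ'.update a (ξ a) := by
          ext i; by_cases hia : i = a
          · subst hia; simp [hξ', Finsupp.coe_update]
          · simp [hξ', Finsupp.coe_update, Function.update_of_ne hia]
        rw [this]
        apply phi_update_le
        have : ξ' a = η a := by simp [hξ', Finsupp.coe_update]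
        rw [this, abs_of_nonneg hηa]
        exact h1 a
      have step2 : Φ.toFun ξ' ≤ Φ.toFun η := by
        apply ih
        · intro i
          by_cases hia : i = a
          · subst hia; simp [hξ', Finsupp.coe_update, abs_of_nonneg hηa]
          · simpa [hξ', Finsupp.coe_update, Function.update_of_ne hia] using h1 i
        · intro i hi
          by_cases hia : i = a
          · subst hia; simp [hξ', Finsupp.coe_update]
          · have : i ∉ insert a s := by simp [hia, hi]
            simpa [hξ', Finsupp.coe_update, Function.update_of_ne hia] using h2 i this
      exact le_trans step1 step2
  apply key (ξ.support ∪ η.support) ξ h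
  intro i hi
  simp only [Finset.mem_union, Finsupp.mem_support_iff, not_or, not_not] at hi
  rw [hi.1, hi.2]

end Helpers
-- Permutations
def evenPerm (n : ℕ) : Equiv.Perm ℕ where
  toFun i := if i < n then 2*i else if i < 2*n then 2*(i-n)+1 else i
  invFun j := if j < 2*n then (if j % 2 = 0 then j/2 else n + j/2) else j
  left_inv i := by dsimp only; split_ifs <;> omega
  right_inv j := by dsimp only; split_ifs <;> omega

def oddPerm (n : ℕ) : Equiv.Perm ℕ where
  toFun i := if i < n then 2*i+1 else if i < 2*n then 2*(i-n) else i
  invFun j := if j < 2*n then (if j % 2 = 0 then n + j/2 else j/2) else j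
  left_inv i := by dsimp only; split_ifs <;> omega
  right_inv j := by dsimp only; split_ifs <;> omega

lemma phi_reindex (Φ : SymmetricNorm) (σ : Equiv.Perm ℕ) (ξ : ℕ → ℝ) (n : ℕ) :
    Φ.toFun (∑ i ∈ Finset.range n, Finsupp.single (σ i) (ξ i)) = Φ.toFun (truncF ξ n) := by
  have : ∑ i ∈ Finset.range n, Finsupp.single (σ i) (ξ i)
      = Finsupp.equivMapDomain σ (truncF ξ n) := by
    rw [truncF, show (Finsupp.equivMapDomain σ : (ℕ →₀ ℝ) → (ℕ →₀ ℝ))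
        (∑ i ∈ Finset.range n, Finsupp.single i (ξ i))
        = Finsupp.domCongr σ (∑ i ∈ Finset.range n, Finsupp.single i (ξ i)) from rfl,
      map_sum]
    refine Finset.sum_congr rfl fun i _ => ?_
    rw [show (Finsupp.domCongr σ : (ℕ →₀ ℝ) ≃+ (ℕ →₀ ℝ)) (Finsupp.single i (ξ i))
        = Finsupp.equivMapDomain σ (Finsupp.single i (ξ i)) from rfl,
      Finsupp.equivMapDomain_single]
  rw [this, Φ.perm_invariant]

lemma phi_even (Φ : SymmetricNorm) (ξ : ℕ → ℝ) (n : ℕ) :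
    Φ.toFun (∑ i ∈ Finset.range n, Finsupp.single (2*i) (ξ i)) = Φ.toFun (truncF ξ n) := by
  have h : ∀ i ∈ Finset.range n, Finsupp.single (2*i) (ξ i)
      = Finsupp.single ((evenPerm n) i) (ξ i) := by
    intro i hi
    have : (evenPerm n) i = 2*i := by
      simp [evenPerm, Equiv.coe_fn_mk, if_pos (Finset.mem_range.1 hi)]
    rw [this]
  rw [Finset.sum_congr rfl h, phi_reindex]

lemma phi_odd (Φ : SymmetricNorm) (ξ : ℕ → ℝ) (n : ℕ) :
    Φ.toFun (∑ i ∈ Finset.range n, Finsupp.single (2*i+1) (ξ i)) = Φ.toFun (truncF ξ n) := by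
  have h : ∀ i ∈ Finset.range n, Finsupp.single (2*i+1) (ξ i)
      = Finsupp.single ((oddPerm n) i) (ξ i) := by
    intro i hi
    have : (oddPerm n) i = 2*i+1 := by
      simp [oddPerm, Equiv.coe_fn_mk, if_pos (Finset.mem_range.1 hi)]
    rw [this]
  rw [Finset.sum_congr rfl h, phi_reindex]
lemma truncF_succ (ξ : ℕ → ℝ) (m : ℕ) :
    truncF ξ (m+1) = truncF ξ m + Finsupp.single m (ξ m) := by
  rw [truncF, truncF, Finset.sum_range_succ]

noncomputable def interl (ζ ζ' : ℕ → ℝ) : ℕ → ℝ :=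
  fun i => if i % 2 = 0 then ζ (i/2) else ζ' (i/2)

lemma trunc_interl (ζ ζ' : ℕ → ℝ) (n : ℕ) :
    truncF (interl ζ ζ') (2*n)
      = (∑ i ∈ Finset.range n, Finsupp.single (2*i) (ζ i))
        + (∑ i ∈ Finset.range n, Finsupp.single (2*i+1) (ζ' i)) := by
  induction n with
  | zero => simp [truncF]
  | succ n ih =>
    have h2 : 2*(n+1) = (2*n+1)+1 := by ring
    have e1 : interl ζ ζ' (2*n) = ζ n := by simp [interl, Nat.mul_div_cancel_left]
    have e2 : interl ζ ζ' (2*n+1) = ζ' n := by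
      have : (2*n+1) % 2 = 1 := by omega
      simp [interl, this]
      congr 1
      omega
    rw [h2, truncF_succ, truncF_succ, ih, Finset.sum_range_succ, Finset.sum_range_succ,
      e1, e2]
    abel

lemma phi_trunc_mono (Φ : SymmetricNorm) (ξ : ℕ → ℝ) (hξ : ∀ i, 0 ≤ ξ i) :
    Monotone fun n => Φ.toFun (truncF ξ n) := by
  intro m m' hmm'
  apply phi_mono
  intro i
  rw [truncF_apply, truncF_apply]
  split_ifs with h1 h2 h2
  · rw [abs_of_nonneg (hξ i)]
  · omega
  · simpa using hξ i
  · simp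

lemma memLPhi_tendsto_ext (Φ : SymmetricNorm) (ξ : ℕ → ℝ) (h : MemLPhi Φ ξ) :
    Tendsto (fun n => Φ.toFun (truncF ξ n)) atTop (nhds (Φ.ext ξ)) := by
  obtain ⟨L, hL⟩ := h.2
  rwa [SymmetricNorm.ext, hL.limUnder_eq]

lemma ext_nonneg (Φ : SymmetricNorm) (ξ : ℕ → ℝ) (h : MemLPhi Φ ξ) : 0 ≤ Φ.ext ξ :=
  ge_of_tendsto (memLPhi_tendsto_ext Φ ξ h) (Eventually.of_forall fun n => Φ.nonneg _)

lemma trunc_le_ext (Φ : SymmetricNorm) (ξ : ℕ → ℝ) (hξ : ∀ i, 0 ≤ ξ i)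
    (h : MemLPhi Φ ξ) (n : ℕ) : Φ.toFun (truncF ξ n) ≤ Φ.ext ξ :=
  Monotone.ge_of_tendsto (phi_trunc_mono Φ ξ hξ) (memLPhi_tendsto_ext Φ ξ h) n

lemma memLPhi_of_bdd (Φ : SymmetricNorm) (ξ : ℕ → ℝ) (hξ : ∀ i, 0 ≤ ξ i)
    (h0 : Tendsto ξ atTop (nhds 0)) (C : ℝ) (hC : ∀ n, Φ.toFun (truncF ξ n) ≤ C) :
    MemLPhi Φ ξ ∧ Φ.ext ξ ≤ C := by
  have hmono := phi_trunc_mono Φ ξ hξ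
  have hbdd : BddAbove (Set.range fun n => Φ.toFun (truncF ξ n)) := ⟨C, by rintro x ⟨n, rfl⟩; exact hC n⟩
  have htend := tendsto_atTop_ciSup hmono hbdd
  have hmem : MemLPhi Φ ξ := ⟨h0, _, htend⟩
  refine ⟨hmem, ?_⟩
  have := memLPhi_tendsto_ext Φ ξ hmem
  exact le_of_tendsto this (Eventually.of_forall fun n => hC n)

lemma tendsto_interl (ζ ζ' : ℕ → ℝ) (h : Tendsto ζ atTop (nhds 0))
    (h' : Tendsto ζ' atTop (nhds 0)) : Tendsto (interl ζ ζ') atTop (nhds 0) := by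
  rw [Metric.tendsto_atTop] at h h' ⊢
  intro ε hε
  obtain ⟨N1, hN1⟩ := h ε hε
  obtain ⟨N2, hN2⟩ := h' ε hε
  refine ⟨2 * (N1 + N2), fun n hn => ?_⟩
  rcases Nat.even_or_odd n with ⟨k, hk⟩ | ⟨k, hk⟩
  · have : interl ζ ζ' n = ζ k := by
      have h2 : n % 2 = 0 := by omega
      have h3 : n / 2 = k := by omega
      simp [interl, h2, h3]
    rw [this]; exact hN1 k (by omega)
  · have : interl ζ ζ' n = ζ' k := by
      have h2 : n % 2 = 1 := by omega
      have h3 : n / 2 = k := by omega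
      simp [interl, h2, h3]
    rw [this]; exact hN2 k (by omega)
lemma isEnum_msum {X : Type*} [MetricSpace X] (x0 : X) (S S' : X → ℕ∞) (s s' : ℕ → X)
    (hs : IsEnum x0 S s) (hs' : IsEnum x0 S' s') :
    IsEnum x0 (msum x0 S S') (fun i => if i % 2 = 0 then s (i/2) else s' (i/2)) := by
  intro x hx
  set u : ℕ → X := fun i => if i % 2 = 0 then s (i/2) else s' (i/2) with hu
  have hE : {i : ℕ | u i = x}
      = ((fun i => 2*i) '' {i | s i = x}) ∪ ((fun i => 2*i+1) '' {i | s' i = x}) := by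
    ext j
    simp only [Set.mem_setOf_eq, Set.mem_union, Set.mem_image]
    constructor
    · intro hj
      rcases Nat.even_or_odd j with ⟨k, hk⟩ | ⟨k, hk⟩
      · left
        refine ⟨k, ?_, by omega⟩
        have h2 : j % 2 = 0 := by omega
        have h3 : j / 2 = k := by omega
        rw [hu] at hj; simp only [h2, h3, if_pos] at hj
        simpa using hj
      · right
        refine ⟨k, ?_, by omega⟩
        have h2 : j % 2 = 1 := by omega
        have h3 : j / 2 = k := by omega
        rw [hu] at hj; simp only [h2, h3] at hj
        simpa using hj
    · rintro (⟨k, hk, rfl⟩ | ⟨k, hk, rfl⟩)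
      · have h2 : (2*k) % 2 = 0 := by omega
        have h3 : (2*k) / 2 = k := by omega
        rw [hu]; simp only [h2, h3, if_pos]; simpa using hk
      · have h2 : (2*k+1) % 2 = 1 := by omega
        have h3 : (2*k+1) / 2 = k := by omega
        rw [hu]; simp only [h2, h3]; simpa using hk
  have hdisj : Disjoint ((fun i => 2*i) '' {i : ℕ | s i = x}) ((fun i => 2*i+1) '' {i | s' i = x}) := by
    rw [Set.disjoint_left]
    rintro j ⟨k, _, rfl⟩ ⟨k', _, hk'⟩
    dsimp only at hk'
    omega
  have hinj1 : Set.InjOn (fun i : ℕ => 2*i) {i | s i = x} := by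
    intro a _ b _ h; dsimp only at h; omega
  have hinj2 : Set.InjOn (fun i : ℕ => 2*i+1) {i | s' i = x} := by
    intro a _ b _ h; dsimp only at h; omega
  rw [msum, if_neg hx, hs x hx, hs' x hx, hE, Set.encard_union_eq hdisj,
    hinj1.encard_image, hinj2.encard_image]
lemma interl_key (Φ : SymmetricNorm) (ζ ζ' : ℕ → ℝ) (hζ0 : ∀ i, 0 ≤ ζ i)
    (hζ'0 : ∀ i, 0 ≤ ζ' i) (hζ : MemLPhi Φ ζ) (hζ' : MemLPhi Φ ζ') :
    MemLPhi Φ (interl ζ ζ') ∧ Φ.ext (interl ζ ζ') ≤ Φ.ext ζ + Φ.ext ζ' := by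
  have hn : ∀ i, 0 ≤ interl ζ ζ' i := by
    intro i; unfold interl; split_ifs
    · exact hζ0 _
    · exact hζ'0 _
  apply memLPhi_of_bdd Φ _ hn (tendsto_interl _ _ hζ.1 hζ'.1)
  intro m
  calc Φ.toFun (truncF (interl ζ ζ') m)
      ≤ Φ.toFun (truncF (interl ζ ζ') (2*m)) := phi_trunc_mono Φ _ hn (by omega)
    _ = Φ.toFun ((∑ i ∈ Finset.range m, Finsupp.single (2*i) (ζ i))
          + (∑ i ∈ Finset.range m, Finsupp.single (2*i+1) (ζ' i))) := by rw [trunc_interl]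
    _ ≤ Φ.toFun (∑ i ∈ Finset.range m, Finsupp.single (2*i) (ζ i))
          + Φ.toFun (∑ i ∈ Finset.range m, Finsupp.single (2*i+1) (ζ' i)) := Φ.add_le _ _
    _ = Φ.toFun (truncF ζ m) + Φ.toFun (truncF ζ' m) := by rw [phi_even, phi_odd]
    _ ≤ Φ.ext ζ + Φ.ext ζ' := add_le_add (trunc_le_ext Φ ζ hζ0 hζ m) (trunc_le_ext Φ ζ' hζ'0 hζ' m)

lemma dPhi_set_nonempty {X : Type*} [MetricSpace X] (Φ : SymmetricNorm) (x0 : X)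
    (S T : X → ℕ∞) (hS : MemSPhi Φ x0 S) (hT : MemSPhi Φ x0 T) :
    {r | ∃ s t : ℕ → X, IsEnum x0 S s ∧ IsEnum x0 T t ∧
      MemLPhi Φ (fun i => dist (s i) (t i)) ∧ r = Φ.ext fun i => dist (s i) (t i)}.Nonempty := by
  obtain ⟨_, s, hsE, hsL⟩ := hS
  obtain ⟨_, t, htE, htL⟩ := hT
  have hdn : ∀ i, (0:ℝ) ≤ dist (s i) (t i) := fun i => dist_nonneg
  have h0 : Tendsto (fun i => dist (s i) (t i)) atTop (nhds 0) := by
    apply squeeze_zero (fun i => dist_nonneg)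
      (fun i => (dist_triangle (s i) x0 (t i)).trans_eq (by rw [dist_comm (s i) x0]))
    have := hsL.1.add htL.1
    simpa using this
  have hbd : ∀ n, Φ.toFun (truncF (fun i => dist (s i) (t i)) n)
      ≤ Φ.ext (fun i => dist x0 (s i)) + Φ.ext (fun i => dist x0 (t i)) := by
    intro n
    calc Φ.toFun (truncF (fun i => dist (s i) (t i)) n)
        ≤ Φ.toFun (truncF (fun i => dist x0 (s i)) n + truncF (fun i => dist x0 (t i)) n) := by
          apply phi_mono
          intro i
          rw [Finsupp.add_apply, truncF_apply, truncF_apply, truncF_apply]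
          split_ifs with h
          · rw [abs_of_nonneg (hdn i)]
            calc dist (s i) (t i) ≤ dist (s i) x0 + dist x0 (t i) := dist_triangle _ _ _
              _ = dist x0 (s i) + dist x0 (t i) := by rw [dist_comm]
          · simp
      _ ≤ Φ.toFun (truncF (fun i => dist x0 (s i)) n)
            + Φ.toFun (truncF (fun i => dist x0 (t i)) n) := Φ.add_le _ _
      _ ≤ _ := add_le_add (trunc_le_ext Φ _ (fun i => dist_nonneg) hsL n)
            (trunc_le_ext Φ _ (fun i => dist_nonneg) htL n)
  have := memLPhi_of_bdd Φ _ hdn h0 _ hbd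
  exact ⟨_, s, t, hsE, htE, this.1, rfl⟩

lemma dPhi_set_bddBelow {X : Type*} [MetricSpace X] (Φ : SymmetricNorm) (x0 : X)
    (S T : X → ℕ∞) :
    BddBelow {r | ∃ s t : ℕ → X, IsEnum x0 S s ∧ IsEnum x0 T t ∧
      MemLPhi Φ (fun i => dist (s i) (t i)) ∧ r = Φ.ext fun i => dist (s i) (t i)} := by
  refine ⟨0, ?_⟩
  rintro r ⟨s, t, _, _, hmem, rfl⟩
  exact ext_nonneg Φ _ hmem
/-- `d_Φ(S + S', T + T') ≤ d_Φ(S, T) + d_Φ(S', T')` for multisets in `S_Φ(X, x₀)`. -/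
theorem dPhi_msum_le (x0 : X) (Φ : SymmetricNorm) (S S' T T' : X → ℕ∞)
    (hS : MemSPhi Φ x0 S) (hS' : MemSPhi Φ x0 S')
    (hT : MemSPhi Φ x0 T) (hT' : MemSPhi Φ x0 T') :
    dPhi Φ x0 (msum x0 S S') (msum x0 T T') ≤ dPhi Φ x0 S T + dPhi Φ x0 S' T' := by
  have hAne := dPhi_set_nonempty Φ x0 S T hS hT
  have hBne := dPhi_set_nonempty Φ x0 S' T' hS' hT'
  have key : ∀ a ∈ {r | ∃ s t : ℕ → X, IsEnum x0 S s ∧ IsEnum x0 T t ∧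
        MemLPhi Φ (fun i => dist (s i) (t i)) ∧ r = Φ.ext fun i => dist (s i) (t i)},
      ∀ b ∈ {r | ∃ s t : ℕ → X, IsEnum x0 S' s ∧ IsEnum x0 T' t ∧
        MemLPhi Φ (fun i => dist (s i) (t i)) ∧ r = Φ.ext fun i => dist (s i) (t i)},
      dPhi Φ x0 (msum x0 S S') (msum x0 T T') ≤ a + b := by
    rintro a ⟨s, t, hsE, htE, hζ, rfl⟩ b ⟨s', t', hs'E, ht'E, hζ', rfl⟩
    set u : ℕ → X := fun i => if i % 2 = 0 then s (i/2) else s' (i/2) with hu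
    set v : ℕ → X := fun i => if i % 2 = 0 then t (i/2) else t' (i/2) with hv
    have hw : (fun i => dist (u i) (v i))
        = interl (fun i => dist (s i) (t i)) (fun i => dist (s' i) (t' i)) := by
      funext i
      by_cases h : i % 2 = 0 <;> simp [hu, hv, interl, h]
    obtain ⟨hmem, hle⟩ :=
      interl_key Φ (fun i => dist (s i) (t i)) (fun i => dist (s' i) (t' i))
        (fun i => dist_nonneg) (fun i => dist_nonneg) hζ hζ'
    have hC : Φ.ext (interl (fun i => dist (s i) (t i)) (fun i => dist (s' i) (t' i)))
        ∈ {r | ∃ p q : ℕ → X, IsEnum x0 (msum x0 S S') p ∧ IsEnum x0 (msum x0 T T') q ∧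
          MemLPhi Φ (fun i => dist (p i) (q i)) ∧ r = Φ.ext fun i => dist (p i) (q i)} :=
      ⟨u, v, isEnum_msum x0 S S' s s' hsE hs'E, isEnum_msum x0 T T' t t' htE ht'E,
        by rw [hw]; exact hmem, by rw [hw]⟩
    calc dPhi Φ x0 (msum x0 S S') (msum x0 T T')
        ≤ Φ.ext (interl (fun i => dist (s i) (t i)) (fun i => dist (s' i) (t' i))) :=
          csInf_le (dPhi_set_bddBelow Φ x0 _ _) hC
      _ ≤ _ := hle
  have h2 : dPhi Φ x0 (msum x0 S S') (msum x0 T T') - dPhi Φ x0 S T ≤ dPhi Φ x0 S' T' := by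
    conv_rhs => rw [dPhi]
    apply le_csInf hBne
    intro b hb
    have h1 : dPhi Φ x0 (msum x0 S S') (msum x0 T T') - b ≤ dPhi Φ x0 S T := by
      conv_rhs => rw [dPhi]
      exact le_csInf hAne fun a ha => by linarith [key a ha b hb]
    linarith
  linarith
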